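/- For any graph G and any a, b ∈ ℕ, the list chromatic number of the Cartesian product G □ K_{a,b} is at most χ_ℓ(G) + a. -/

import Mathlib

open SimpleGraph

/-- A proper coloring of `G` from the list assignment `L`. -/
def IsProperListColoring {V : Type*} (G : SimpleGraph V) (L : V → Finset ℕ) (f : V → ℕ) : Prop :=
  (∀ v, f v ∈ L v) ∧ ∀ ⦃v w⦄, G.Adj v w → f v ≠ f w

/-- `G` is `k`-choosable: every `k`-assignment admits a proper coloring. -/
def Choosable {V : Type*} (G : SimpleGraph V) (k : ℕ) : Prop :=
  ∀ L : V → Finset ℕ, (∀ v, (L v).card = k) → ∃ f, IsProperListColoring G L f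

/-- The list chromatic number: the least `k` such that `G` is `k`-choosable. -/
noncomputable def listChromaticNumber {V : Type*} (G : SimpleGraph V) : ℕ :=
  sInf {k | Choosable G k}

/-- The list color function `P_ℓ(G,k)`: the minimum number of proper `L`-colorings
over all `k`-assignments `L`. -/
noncomputable def listColorFunction {V : Type*} (G : SimpleGraph V) (k : ℕ) : ℕ :=
  sInf {n | ∃ L : V → Finset ℕ, (∀ v, (L v).card = k) ∧
    n = Nat.card {f : V → ℕ // IsProperListColoring G L f}}

/-- `G` is strong `k`-chromatic-choosable: `χ(G) = k` and every `(k-1)`-assignment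
admitting no proper coloring is constant. -/
def StrongChromChoosable {V : Type*} (G : SimpleGraph V) (k : ℕ) : Prop :=
  G.chromaticNumber = k ∧
  ∀ L : V → Finset ℕ, (∀ v, (L v).card = k - 1) →
    (¬ ∃ f, IsProperListColoring G L f) → ∀ v w, L v = L w
lemma choosable_card {V : Type*} [Fintype V] (G : SimpleGraph V) :
    Choosable G (Fintype.card V) := by
  classical
  intro L hL
  obtain ⟨f, hfinj, hfmem⟩ :=
    (Finset.all_card_le_biUnion_card_iff_exists_injective L).mp (by
      intro s
      rcases s.eq_empty_or_nonempty with rfl | ⟨v, hv⟩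
      · simp
      · calc s.card ≤ Fintype.card V := Finset.card_le_univ s
          _ = (L v).card := (hL v).symm
          _ ≤ (s.biUnion L).card :=
            Finset.card_le_card (Finset.subset_biUnion_of_mem L hv))
  exact ⟨f, hfmem, fun v w h => hfinj.ne (G.ne_of_adj h)⟩

lemma choosable_of_le {V : Type*} (G : SimpleGraph V) {k : ℕ} (h : Choosable G k)
    (L : V → Finset ℕ) (hL : ∀ v, k ≤ (L v).card) :
    ∃ f, IsProperListColoring G L f := by
  classical
  have h' : ∀ v, ∃ t ⊆ L v, t.card = k := fun v => Finset.exists_subset_card_eq (hL v)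
  choose L' hsub hcard using h'
  obtain ⟨f, hmem, hadj⟩ := h L' hcard
  exact ⟨f, fun v => hsub v (hmem v), hadj⟩
theorem listChromatic_boxProd_completeBipartite_le {V : Type*} [Fintype V]
    (G : SimpleGraph V) (a b : ℕ) (ha : 1 ≤ a) (hb : 1 ≤ b) :
    listChromaticNumber (G □ completeBipartiteGraph (Fin a) (Fin b)) ≤
      listChromaticNumber G + a := by
  classical
  set k := listChromaticNumber G with hkdef
  have hmem : Fintype.card V ∈ {n | Choosable G n} := choosable_card G
  have hk : Choosable G k := Nat.sInf_mem ⟨Fintype.card V, hmem⟩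
  apply Nat.sInf_le
  intro L hL
  -- color the left copies
  have hA : ∀ x : Fin a, ∃ f, IsProperListColoring G (fun u => L (u, Sum.inl x)) f :=
    fun x => choosable_of_le G hk _ (fun u => by rw [hL]; omega)
  choose F hF using hA
  -- color the right copies avoiding the left colors
  have hB : ∀ y : Fin b, ∃ g, IsProperListColoring G
      (fun u => L (u, Sum.inr y) \ Finset.univ.image (fun x : Fin a => F x u)) g := by
    intro y
    apply choosable_of_le G hk
    intro u
    have h1 : (Finset.univ.image (fun x : Fin a => F x u)).card ≤ a := by
      simpa using Finset.card_image_le.trans (le_of_eq (by simp))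
    have h2 := Finset.le_card_sdiff (Finset.univ.image (fun x : Fin a => F x u))
      (L (u, Sum.inr y))
    rw [hL] at h2
    omega
  choose Gc hGc using hB
  refine ⟨fun p => Sum.elim (fun x => F x p.1) (fun y => Gc y p.1) p.2, ?_, ?_⟩
  · rintro ⟨u, x | y⟩
    · exact (hF x).1 u
    · exact Finset.mem_sdiff.mp ((hGc y).1 u) |>.1
  · rintro ⟨u, p⟩ ⟨u', p'⟩ hadj
    rw [SimpleGraph.boxProd_adj] at hadj
    rcases hadj with ⟨hGuu, rfl⟩ | ⟨hpp, rfl⟩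
    · cases p with
      | inl x => exact (hF x).2 hGuu
      | inr y => exact (hGc y).2 hGuu
    · have hnot : ∀ (y : Fin b) (x : Fin a), Gc y u ≠ F x u := by
        intro y x h
        have := (Finset.mem_sdiff.mp ((hGc y).1 u)).2
        exact this (Finset.mem_image.mpr ⟨x, Finset.mem_univ x, h.symm⟩)
      cases p with
      | inl x =>
        cases p' with
        | inl x' => simp at hpp
        | inr y => exact fun h => hnot y x h.symm
      | inr y =>
        cases p' with
        | inl x => exact hnot y x
        | inr y' => simp at hpp
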